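/- Let p ≡ 1 (mod 4) be a prime and let s be the Ding-Helleseth-Lam sequence of period p, with s_i = 1 iff i ∈ D_0^{(4,p)} ∪ D_1^{(4,p)}. Then gcd(P_s(2), 2^p - 1) = 1; that is, the 2-adic complexity of s equals p. -/

import Mathlib

set_option maxHeartbeats 1000000

open Finset

namespace DHL

local notation "ι" => (Zsqrtd.sqrtd : GaussianInt)

section Chi

variable {p : ℕ} (hp : p.Prime) (hp4 : p % 4 = 1) (α : ZMod p) (hα : orderOf α = p - 1)

include hp hp4


lemma p5 : 5 ≤ p := by
  have h2 := hp.two_le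
  rcases Nat.lt_or_ge p 5 with h | h
  · interval_cases p <;> simp_all
  · exact h

lemma e4 : 4 * ((p - 1) / 4) = p - 1 := by
  have := p5 hp hp4; omega

include hα in
lemma alpha_ne_zero : α ≠ 0 := by
  intro h
  have h1 : α ^ (p - 1) = 1 := hα ▸ pow_orderOf_eq_one α
  rw [h, zero_pow (by have := p5 hp hp4; omega)] at h1
  haveI : Fact p.Prime := ⟨hp⟩
  exact zero_ne_one h1

include hα in
lemma beta_sq : (α ^ ((p - 1) / 4)) ^ 2 = -1 := by
  haveI : Fact p.Prime := ⟨hp⟩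
  have h5 := p5 hp hp4
  have h1 : (α ^ ((p - 1) / 4)) ^ 4 = 1 := by
    rw [← pow_mul, mul_comm, e4 hp hp4, ← hα, pow_orderOf_eq_one]
  have h2 : ((α ^ ((p - 1) / 4)) ^ 2 - 1) * ((α ^ ((p - 1) / 4)) ^ 2 + 1) = 0 := by
    ring_nf
    linear_combination h1
  rcases mul_eq_zero.mp h2 with h | h
  · exfalso
    have h3 : α ^ (2 * ((p - 1) / 4)) = 1 := by
      rw [mul_comm, pow_mul]
      linear_combination h
    have h4 := orderOf_dvd_of_pow_eq_one h3
    rw [hα] at h4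
    have := Nat.le_of_dvd (by omega) h4
    omega
  · linear_combination h

include hα in
lemma beta_ne_one : α ^ ((p - 1) / 4) ≠ 1 := by
  intro h
  have h4 := orderOf_dvd_of_pow_eq_one h
  rw [hα] at h4
  have h5 := p5 hp hp4
  have := Nat.le_of_dvd (by omega) h4
  omega

lemma neg_one_ne_one' : (-1 : ZMod p) ≠ 1 := by
  haveI : Fact p.Prime := ⟨hp⟩
  intro h
  have h2 : (2 : ZMod p) = 0 := by linear_combination -h
  
  have h3 : ((2 : ℕ) : ZMod p) = 0 := by exact_mod_cast h2
  have := (ZMod.natCast_eq_zero_iff 2 p).mp h3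
  have := Nat.le_of_dvd (by norm_num) this
  have := p5 hp hp4
  omega

include hα in
lemma fourclass {x : ZMod p} (hx : x ≠ 0) :
    x ^ ((p - 1) / 4) = 1 ∨ x ^ ((p - 1) / 4) = α ^ ((p - 1) / 4) ∨
    x ^ ((p - 1) / 4) = -1 ∨ x ^ ((p - 1) / 4) = -α ^ ((p - 1) / 4) := by
  haveI : Fact p.Prime := ⟨hp⟩
  set β := α ^ ((p - 1) / 4) with hβ
  set t := x ^ ((p - 1) / 4) with ht
  have h1 : t ^ 4 = 1 := by
    rw [ht, ← pow_mul, mul_comm ((p-1)/4), e4 hp hp4, ZMod.pow_card_sub_one_eq_one hx]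
  have h2 : (t ^ 2 - 1) * (t ^ 2 + 1) = 0 := by ring_nf; linear_combination h1
  rcases mul_eq_zero.mp h2 with h | h
  · have h3 : (t - 1) * (t + 1) = 0 := by ring_nf; linear_combination h
    rcases mul_eq_zero.mp h3 with h4 | h4
    · exact Or.inl (by linear_combination h4)
    · exact Or.inr (Or.inr (Or.inl (by linear_combination h4)))
  · have hb2 := beta_sq hp hp4 α hα
    have h3 : (t - β) * (t + β) = 0 := by ring_nf; linear_combination h - hb2
    rcases mul_eq_zero.mp h3 with h4 | h4
    · exact Or.inr (Or.inl (by linear_combination h4))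
    · exact Or.inr (Or.inr (Or.inr (by linear_combination h4)))

end Chi

end DHL

namespace DHL

open Finset

local notation "ι" => (Zsqrtd.sqrtd : GaussianInt)

def chiFun {p : ℕ} (e' : ℕ) (β : ZMod p) (x : ZMod p) : GaussianInt :=
  if x ^ e' = 1 then 1 else if x ^ e' = β then ι else if x ^ e' = -1 then -1
  else if x ^ e' = -β then -ι else 0

section ChiDef

variable {p : ℕ} (hp : p.Prime) (hp4 : p % 4 = 1) (α : ZMod p) (hα : orderOf α = p - 1)

include hp hp4 in
lemma two_ne_zero'' : (2 : ZMod p) ≠ 0 := by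
  intro h
  exact neg_one_ne_one' hp hp4 (by linear_combination -h)

noncomputable def chi0 : MulChar (ZMod p) GaussianInt where
  toFun := chiFun ((p-1)/4) (α ^ ((p-1)/4))
  map_one' := by simp [chiFun]
  map_mul' := by
    haveI : Fact p.Prime := ⟨hp⟩
    intro x y
    set e' := (p-1)/4 with he'
    set β := α ^ ((p-1)/4) with hβ
    have h5 := p5 hp hp4
    have he0 : e' ≠ 0 := by have := e4 hp hp4; omega
    have hb2 : β * β = -1 := by have := beta_sq hp hp4 α hα; rwa [sq] at this
    have hb1 : β ≠ 1 := beta_ne_one hp hp4 α hα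
    have hn1 : (-1 : ZMod p) ≠ 1 := neg_one_ne_one' hp hp4
    have h2z : (2 : ZMod p) ≠ 0 := two_ne_zero'' hp hp4
    have hbne : β ≠ 0 := pow_ne_zero _ (alpha_ne_zero hp hp4 α hα)
    have hbm1 : β ≠ -1 := by
      intro h
      apply hn1
      calc (-1 : ZMod p) = β * β := hb2.symm
      _ = (-1) * (-1) := by rw [h]
      _ = 1 := by ring
    have hm1b : (-1 : ZMod p) ≠ β := Ne.symm hbm1
    have hc3 : -β ≠ 1 := fun h => hbm1 (by linear_combination -h)
    have hcm1 : -β ≠ -1 := fun h => hb1 (by linear_combination -h)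
    have hcb : -β ≠ β := by
      intro h
      apply hbne
      have h2 : 2 * β = 0 := by linear_combination -h
      rcases mul_eq_zero.mp h2 with h3 | h3
      · exact absurd h3 h2z
      · exact h3
    have hbmb : β ≠ -β := Ne.symm hcb
    have h1b : (1 : ZMod p) ≠ β := Ne.symm hb1
    have h1m1 : (1 : ZMod p) ≠ -1 := Ne.symm hn1
    have h1mb : (1 : ZMod p) ≠ -β := Ne.symm hc3
    have hbmm1 : β ≠ -1 := hbm1
    have hm1mb : (-1 : ZMod p) ≠ -β := Ne.symm hcm1
    have hm1z : (0 : ZMod p) ≠ -1 := by simp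
    have hmbz : (0 : ZMod p) ≠ -β := by
      intro h
      exact hbne (neg_eq_zero.mp h.symm)
    have h0b : (0 : ZMod p) ≠ β := Ne.symm hbne
    by_cases hx : x = 0
    · have hxy : x * y = 0 := by rw [hx, zero_mul]
      simp [chiFun, hx, hxy, zero_pow he0, h0b, zero_ne_one, hm1z, hmbz]
    by_cases hy : y = 0
    · have hxy : x * y = 0 := by rw [hy, mul_zero]
      simp [chiFun, hy, hxy, zero_pow he0, h0b, zero_ne_one, hm1z, hmbz]
    rcases fourclass hp hp4 α hα hx with h1|h1|h1|h1 <;>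
      rcases fourclass hp hp4 α hα hy with h2|h2|h2|h2 <;>
      simp only [he', hβ] at * <;>
      simp only [chiFun, mul_pow, h1, h2, one_mul, mul_one, neg_mul, mul_neg, neg_neg, hb2] <;>
      simp -failIfUnchanged only [if_pos rfl, if_neg hb1, if_neg hn1, if_neg hc3, if_neg hcb, if_neg hcm1,
        if_neg hm1b, if_neg hbm1, if_neg h1b, if_neg h1m1, if_neg h1mb, if_neg hbmb,
        if_neg hm1mb, ite_true, ite_false] <;>
      decide
  map_nonunit' := by
    haveI : Fact p.Prime := ⟨hp⟩
    intro a ha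
    have ha0 : a = 0 := by
      by_contra h
      exact ha (isUnit_iff_ne_zero.mpr h)
    have he0 : (p-1)/4 ≠ 0 := by have := e4 hp hp4; have := p5 hp hp4; omega
    have hbne : α ^ ((p-1)/4) ≠ 0 := pow_ne_zero _ (alpha_ne_zero hp hp4 α hα)
    have hm1z : (0 : ZMod p) ≠ -1 := by simp
    have hmbz : (0 : ZMod p) ≠ -α ^ ((p-1)/4) := by
      intro h
      exact hbne (neg_eq_zero.mp h.symm)
    simp [chiFun, ha0, zero_pow he0, Ne.symm hbne, zero_ne_one, hm1z, hmbz]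

lemma chi0_apply (x : ZMod p) :
    chi0 hp hp4 α hα x = chiFun ((p-1)/4) (α ^ ((p-1)/4)) x := rfl

lemma chi0_alpha : chi0 hp hp4 α hα α = ι := by
  rw [chi0_apply, chiFun, if_neg, if_pos rfl]
  exact beta_ne_one hp hp4 α hα

lemma chi0_apply_pow (m : ℕ) : chi0 hp hp4 α hα (α ^ m) = ι ^ m := by
  rw [map_pow, chi0_alpha]

end ChiDef

end DHL

namespace DHL

open Finset

local notation "ι" => (Zsqrtd.sqrtd : GaussianInt)

section ChiProps

variable {p : ℕ} (hp : p.Prime) (hp4 : p % 4 = 1) (α : ZMod p) (hα : orderOf α = p - 1)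

lemma chi0_values (x : ZMod p) :
    chi0 hp hp4 α hα x = 0 ∨ chi0 hp hp4 α hα x = 1 ∨ chi0 hp hp4 α hα x = ι ∨
      chi0 hp hp4 α hα x = -1 ∨ chi0 hp hp4 α hα x = -ι := by
  rw [chi0_apply, chiFun]
  split_ifs <;> tauto

lemma chi0_unit_ne_zero (a : (ZMod p)ˣ) : chi0 hp hp4 α hα ↑a ≠ 0 := by
  have h := MulChar.coe_toUnitHom (chi0 hp hp4 α hα) a
  rw [← h]
  exact Units.ne_zero _

lemma chi0_pow_four : (chi0 hp hp4 α hα) ^ 4 = 1 := by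
  apply MulChar.ext
  intro a
  rw [MulChar.pow_apply_coe, MulChar.one_apply_coe]
  rcases chi0_values hp hp4 α hα ↑a with h | h | h | h | h
  · exact absurd h (chi0_unit_ne_zero hp hp4 α hα a)
  all_goals rw [h]; decide

lemma chi0_inv : (chi0 hp hp4 α hα)⁻¹ = (chi0 hp hp4 α hα) ^ 3 := by
  apply inv_eq_of_mul_eq_one_right
  rw [← pow_succ']
  exact chi0_pow_four hp hp4 α hα

lemma chi0_star_comp :
    (chi0 hp hp4 α hα).ringHomComp (starRingEnd GaussianInt) = (chi0 hp hp4 α hα) ^ 3 := by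
  apply MulChar.ext
  intro a
  rw [MulChar.pow_apply_coe]
  have : (chi0 hp hp4 α hα).ringHomComp (starRingEnd GaussianInt) ↑a
      = star (chi0 hp hp4 α hα ↑a) := rfl
  rw [this]
  rcases chi0_values hp hp4 α hα ↑a with h | h | h | h | h
  · exact absurd h (chi0_unit_ne_zero hp hp4 α hα a)
  all_goals rw [h]; decide

include hα in
lemma chi0_neg_one : chi0 hp hp4 α hα (-1) = (-1 : GaussianInt) ^ ((p - 1) / 4) := by
  have h : (-1 : ZMod p) = α ^ (((p - 1) / 4) * 2) := by
    rw [pow_mul]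
    exact (beta_sq hp hp4 α hα).symm
  rw [h, chi0_apply_pow, mul_comm ((p - 1) / 4) 2, pow_mul]
  have h2 : (ι : GaussianInt) ^ 2 = -1 := by decide
  rw [h2]

lemma jacobiSum_chi0_conj [NeZero p] :
    jacobiSum ((chi0 hp hp4 α hα) ^ 3) ((chi0 hp hp4 α hα) ^ 3)
      = star (jacobiSum (chi0 hp hp4 α hα) (chi0 hp hp4 α hα)) := by
  haveI : Fact p.Prime := ⟨hp⟩
  rw [← chi0_star_comp, jacobiSum_ringHomComp]
  rfl

include hp hp4 hα in
lemma jacobiSum_chi0_im_even [NeZero p] : 2 ∣ (jacobiSum (chi0 hp hp4 α hα) (chi0 hp hp4 α hα)).im := by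
  haveI : Fact p.Prime := ⟨hp⟩
  set χ := chi0 hp hp4 α hα with hχ
  have him : (jacobiSum χ χ).im = ∑ x : ZMod p, (χ x * χ (1 - x)).im := by
    rw [jacobiSum]
    exact map_sum (AddMonoidHom.mk' Zsqrtd.im (fun a b => Zsqrtd.im_add a b)) _ _
  have hsq : ∀ v : GaussianInt, (v = 0 ∨ v = 1 ∨ v = ι ∨ v = -1 ∨ v = -ι) → (v * v).im = 0 := by
    intro v hv
    rcases hv with h|h|h|h|h <;> rw [h] <;> decide
  have h2 : ((jacobiSum χ χ).im : ZMod 2) = 0 := by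
    rw [him]
    push_cast
    apply Finset.sum_ninvolution (g := fun x => 1 - x)
    · intro a
      have : χ (1 - a) * χ (1 - (1 - a)) = χ a * χ (1 - a) := by
        rw [sub_sub_cancel, mul_comm]
      rw [this]
      rw [← two_mul]
      rw [show ((2 : ZMod 2)) = 0 from rfl, zero_mul]
    · intro a hne
      intro heq
      apply hne
      have ha : 1 - a = a := heq
      have : χ a * χ (1 - a) = χ a * χ a := by rw [ha]
      rw [this, hsq _ (chi0_values hp hp4 α hα a)]
      norm_num
    · intro a; exact Finset.mem_univ _
    · intro a; ring
  exact (ZMod.intCast_zmod_eq_zero_iff_dvd _ 2).mp h2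

end ChiProps

end DHL

namespace DHL

open Finset

local notation "ι" => (Zsqrtd.sqrtd : GaussianInt)

noncomputable def glift {K : Type} [Field K] (ζ : K) (hζ : ζ ^ 2 = -1) : GaussianInt →+* K :=
  Zsqrtd.lift ⟨ζ, by push_cast; linear_combination hζ⟩

lemma glift_sqrtd {K : Type} [Field K] (ζ : K) (hζ : ζ ^ 2 = -1) : glift ζ hζ ι = ζ := by
  simp [glift]

section Core

variable {p : ℕ} [NeZero p] (hp : p.Prime) (hp4 : p % 4 = 1) (α : ZMod p)
  (hα : orderOf α = p - 1)
  {K : Type} [Field K] (ζ θ : K) (hζ : ζ ^ 2 = -1) (hθp : θ ^ p = 1) (hθ1 : θ ≠ 1)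
  (hpK : (p : K) ≠ 0) (h2K : (2 : K) ≠ 0)

include hp hp4 hα in
lemma exists_pow_eq {x : ZMod p} (hx : x ≠ 0) : ∃ m : ℕ, α ^ m = x := by
  haveI : Fact p.Prime := ⟨hp⟩
  have hαu : IsUnit α := isUnit_iff_ne_zero.mpr (alpha_ne_zero hp hp4 α hα)
  set u := hαu.unit with hu
  have huv : (u : ZMod p) = α := hαu.unit_spec
  have hord : orderOf u = p - 1 := by
    rw [← hα, ← huv, orderOf_units]
  have htop : Subgroup.zpowers u = ⊤ := by
    apply Subgroup.eq_top_of_card_eq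
    rw [Nat.card_zpowers, hord, Nat.card_eq_fintype_card, ZMod.card_units]
  have hxu : IsUnit x := isUnit_iff_ne_zero.mpr hx
  have hmem : hxu.unit ∈ Subgroup.zpowers u := htop ▸ Subgroup.mem_top _
  rw [← mem_powers_iff_mem_zpowers] at hmem
  obtain ⟨m, hm⟩ := hmem
  refine ⟨m, ?_⟩
  have := congrArg (fun w : (ZMod p)ˣ => (w : ZMod p)) hm
  simpa [huv, hxu.unit_spec] using this

section WithChar

variable (hq : True)

-- abbreviations
noncomputable def chiK (hp : p.Prime) (hp4 : p % 4 = 1) (α : ZMod p) (hα : orderOf α = p - 1)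
    {K : Type} [Field K] (ζ : K) (hζ : ζ ^ 2 = -1) : MulChar (ZMod p) K :=
  (chi0 hp hp4 α hα).ringHomComp (glift ζ hζ)

end WithChar

include hp hp4 hα hζ h2K in
lemma chiK_ne_one : chiK hp hp4 α hα ζ hζ ≠ 1 := by
  haveI : Fact p.Prime := ⟨hp⟩
  have hαu : IsUnit α := isUnit_iff_ne_zero.mpr (alpha_ne_zero hp hp4 α hα)
  rw [MulChar.ne_one_iff]
  refine ⟨hαu.unit, ?_⟩
  have h1 : chiK hp hp4 α hα ζ hζ ↑hαu.unit = ζ := by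
    rw [hαu.unit_spec]
    show glift ζ hζ (chi0 hp hp4 α hα α) = ζ
    rw [chi0_alpha, glift_sqrtd]
  rw [h1]
  intro h
  rw [h] at hζ
  apply h2K
  linear_combination hζ

include hp hp4 hα hζ h2K in
lemma chiK_sq_ne_one : (chiK hp hp4 α hα ζ hζ) ^ 2 ≠ 1 := by
  haveI : Fact p.Prime := ⟨hp⟩
  have hαu : IsUnit α := isUnit_iff_ne_zero.mpr (alpha_ne_zero hp hp4 α hα)
  rw [MulChar.ne_one_iff]
  refine ⟨hαu.unit, ?_⟩
  have h1 : chiK hp hp4 α hα ζ hζ ↑hαu.unit = ζ := by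
    rw [hαu.unit_spec]
    show glift ζ hζ (chi0 hp hp4 α hα α) = ζ
    rw [chi0_alpha, glift_sqrtd]
  rw [MulChar.pow_apply_coe, h1, hζ]
  intro h
  apply h2K
  linear_combination -h

include hp hp4 hα hζ in
lemma chiK_pow_four : (chiK hp hp4 α hα ζ hζ) ^ 4 = 1 := by
  haveI : Fact p.Prime := ⟨hp⟩
  rw [chiK, MulChar.ringHomComp_pow, chi0_pow_four]
  exact MulChar.ringHomComp_one _

include hp hp4 hα hζ in
lemma chiK_inv : (chiK hp hp4 α hα ζ hζ)⁻¹ = (chiK hp hp4 α hα ζ hζ) ^ 3 := by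
  apply inv_eq_of_mul_eq_one_right
  rw [← pow_succ']
  exact chiK_pow_four hp hp4 α hα ζ hζ

include hp hp4 hα hζ in
lemma chiK_neg_one : chiK hp hp4 α hα ζ hζ (-1) = (-1 : K) ^ ((p - 1) / 4) := by
  haveI : Fact p.Prime := ⟨hp⟩
  show glift ζ hζ (chi0 hp hp4 α hα (-1)) = _
  rw [chi0_neg_one hp hp4 α hα, map_pow, map_neg, map_one]

end Core

end DHL

namespace DHL

open Finset AddChar

local notation "ι" => (Zsqrtd.sqrtd : GaussianInt)

section Gauss

variable {p : ℕ} [NeZero p] (hp : p.Prime) (hp4 : p % 4 = 1) (α : ZMod p)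
  (hα : orderOf α = p - 1)
  {K : Type} [Field K] (ζ θ : K) (hζ : ζ ^ 2 = -1) (hθp : θ ^ p = 1) (hθ1 : θ ≠ 1)
  (hpK : (p : K) ≠ 0) (h2K : (2 : K) ≠ 0)

include hp hθ1 in
lemma psi_prim : (AddChar.zmodChar p hθp).IsPrimitive := by
  haveI : Fact (1 < p) := ⟨hp.one_lt⟩
  haveI : Fact p.Prime := ⟨hp⟩
  apply AddChar.IsPrimitive.of_ne_one
  rw [AddChar.zmod_char_ne_one_iff]
  rw [AddChar.zmodChar_apply, ZMod.val_one, pow_one]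
  exact hθ1

lemma E_sq : ((-1 : K) ^ ((p - 1) / 4)) ^ 2 = 1 := by
  rw [← pow_mul, mul_comm, pow_mul]
  norm_num

include hp hp4 hα hζ in
lemma chiK3_neg_one :
    ((chiK hp hp4 α hα ζ hζ) ^ 3) (-1) = (-1 : K) ^ ((p - 1) / 4) := by
  rw [MulChar.pow_apply' _ (by norm_num), chiK_neg_one hp hp4 α hα ζ hζ]
  calc ((-1 : K) ^ ((p - 1) / 4)) ^ 3
      = (((-1 : K) ^ ((p - 1) / 4)) ^ 2) * ((-1 : K) ^ ((p - 1) / 4)) := by ring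
  _ = (-1 : K) ^ ((p - 1) / 4) := by rw [E_sq, one_mul]

include hp hp4 hα hζ hθ1 h2K in
lemma gauss_I1 :
    gaussSum (chiK hp hp4 α hα ζ hζ) (AddChar.zmodChar p hθp) *
      gaussSum ((chiK hp hp4 α hα ζ hζ) ^ 3) (AddChar.zmodChar p hθp)
      = (-1 : K) ^ ((p - 1) / 4) * p := by
  haveI : Fact p.Prime := ⟨hp⟩
  set χ := chiK hp hp4 α hα ζ hζ with hχdef
  set ψ := AddChar.zmodChar p hθp with hψdef
  have h := gaussSum_mul_gaussSum_eq_card (chiK_ne_one hp hp4 α hα ζ hζ h2K)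
    (psi_prim hp θ hθp hθ1)
  rw [ZMod.card] at h
  have h2 := mul_gaussSum_inv_eq_gaussSum χ⁻¹ ψ
  rw [chiK_inv hp hp4 α hα ζ hζ, chiK3_neg_one hp hp4 α hα ζ hζ] at h2
  rw [chiK_inv hp hp4 α hα ζ hζ] at h
  rw [← h2]
  calc gaussSum χ ψ * ((-1:K)^((p-1)/4) * gaussSum (χ ^ 3) ψ⁻¹)
      = (-1:K)^((p-1)/4) * (gaussSum χ ψ * gaussSum (χ ^ 3) ψ⁻¹) := by ring
  _ = (-1:K)^((p-1)/4) * p := by rw [h]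

include hp hp4 hα hζ hθ1 h2K in
lemma gauss_I3 :
    gaussSum ((chiK hp hp4 α hα ζ hζ) ^ 2) (AddChar.zmodChar p hθp) *
      gaussSum ((chiK hp hp4 α hα ζ hζ) ^ 2) (AddChar.zmodChar p hθp) = p := by
  haveI : Fact p.Prime := ⟨hp⟩
  set χ := chiK hp hp4 α hα ζ hζ with hχdef
  set ψ := AddChar.zmodChar p hθp with hψdef
  have hinv2 : (χ ^ 2)⁻¹ = χ ^ 2 := by
    apply inv_eq_of_mul_eq_one_right
    rw [← pow_add]
    exact chiK_pow_four hp hp4 α hα ζ hζ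
  have h := gaussSum_mul_gaussSum_eq_card (chiK_sq_ne_one hp hp4 α hα ζ hζ h2K)
    (psi_prim hp θ hθp hθ1)
  rw [ZMod.card, hinv2] at h
  have h2 := mul_gaussSum_inv_eq_gaussSum (χ ^ 2) ψ
  have hE : (χ ^ 2) (-1) = 1 := by
    rw [MulChar.pow_apply' _ (by norm_num), chiK_neg_one hp hp4 α hα ζ hζ]
    exact E_sq
  rw [hE, one_mul] at h2
  rw [← h2] at h ⊢
  exact h

include hp hp4 hα hζ hθ1 h2K in
lemma gauss_I2a :
    gaussSum ((chiK hp hp4 α hα ζ hζ) ^ 2) (AddChar.zmodChar p hθp) *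
      glift ζ hζ (jacobiSum (chi0 hp hp4 α hα) (chi0 hp hp4 α hα))
      = gaussSum (chiK hp hp4 α hα ζ hζ) (AddChar.zmodChar p hθp) *
        gaussSum (chiK hp hp4 α hα ζ hζ) (AddChar.zmodChar p hθp) := by
  haveI : Fact p.Prime := ⟨hp⟩
  have hne : chiK hp hp4 α hα ζ hζ * chiK hp hp4 α hα ζ hζ ≠ 1 := by
    rw [← pow_two]
    exact chiK_sq_ne_one hp hp4 α hα ζ hζ h2K
  have h := jacobiSum_mul_nontrivial hne (AddChar.zmodChar p hθp)
  rw [← pow_two] at h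
  have hj : jacobiSum (chiK hp hp4 α hα ζ hζ) (chiK hp hp4 α hα ζ hζ)
      = glift ζ hζ (jacobiSum (chi0 hp hp4 α hα) (chi0 hp hp4 α hα)) := by
    rw [chiK, jacobiSum_ringHomComp]
  rw [hj] at h
  exact h

include hp hp4 hα hζ hθ1 h2K in
lemma gauss_I2b :
    gaussSum ((chiK hp hp4 α hα ζ hζ) ^ 2) (AddChar.zmodChar p hθp) *
      glift ζ hζ (star (jacobiSum (chi0 hp hp4 α hα) (chi0 hp hp4 α hα)))
      = gaussSum ((chiK hp hp4 α hα ζ hζ) ^ 3) (AddChar.zmodChar p hθp) *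
        gaussSum ((chiK hp hp4 α hα ζ hζ) ^ 3) (AddChar.zmodChar p hθp) := by
  haveI : Fact p.Prime := ⟨hp⟩
  set χ := chiK hp hp4 α hα ζ hζ with hχdef
  have h6 : χ ^ 3 * χ ^ 3 = χ ^ 2 := by
    rw [← pow_add]
    show χ ^ 6 = χ ^ 2
    calc χ ^ 6 = χ ^ 2 * χ ^ 4 := by rw [← pow_add]
    _ = χ ^ 2 := by rw [chiK_pow_four hp hp4 α hα ζ hζ, mul_one]
  have hne : χ ^ 3 * χ ^ 3 ≠ 1 := by
    rw [h6]
    exact chiK_sq_ne_one hp hp4 α hα ζ hζ h2K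
  have h := jacobiSum_mul_nontrivial hne (AddChar.zmodChar p hθp)
  rw [h6] at h
  have hj : jacobiSum (χ ^ 3) (χ ^ 3)
      = glift ζ hζ (star (jacobiSum (chi0 hp hp4 α hα) (chi0 hp hp4 α hα))) := by
    rw [hχdef, chiK, MulChar.ringHomComp_pow, jacobiSum_ringHomComp,
      jacobiSum_chi0_conj hp hp4 α hα]
  rw [hj] at h
  exact h

include hp hp4 hα hζ hθp hθ1 hpK h2K in
lemma core_norm :
    ((Zsqrtd.norm (jacobiSum (chi0 hp hp4 α hα) (chi0 hp hp4 α hα)) : ℤ) : K) = p := by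
  haveI : Fact p.Prime := ⟨hp⟩
  set χ := chiK hp hp4 α hα ζ hζ with hχdef
  set ψ := AddChar.zmodChar p hθp with hψdef
  set J := jacobiSum (chi0 hp hp4 α hα) (chi0 hp hp4 α hα) with hJdef
  have hφ : glift ζ hζ J * glift ζ hζ (star J) = ((Zsqrtd.norm J : ℤ) : K) := by
    rw [← map_mul, ← Zsqrtd.norm_eq_mul_conj, map_intCast]
  apply mul_left_cancel₀ hpK
  have hI1 := gauss_I1 hp hp4 α hα ζ θ hζ hθp hθ1 h2K
  have hI3 := gauss_I3 hp hp4 α hα ζ θ hζ hθp hθ1 h2K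
  have hI2a := gauss_I2a hp hp4 α hα ζ θ hζ hθp hθ1 h2K
  have hI2b := gauss_I2b hp hp4 α hα ζ θ hζ hθp hθ1 h2K
  have hE2 : ((-1 : K) ^ ((p - 1) / 4)) ^ 2 = 1 := E_sq
  calc (p : K) * ((Zsqrtd.norm J : ℤ) : K)
      = (gaussSum (χ^2) ψ * gaussSum (χ^2) ψ) * (glift ζ hζ J * glift ζ hζ (star J)) := by
        rw [hI3, hφ]
  _ = (gaussSum (χ^2) ψ * glift ζ hζ J) * (gaussSum (χ^2) ψ * glift ζ hζ (star J)) := by ring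
  _ = (gaussSum χ ψ * gaussSum χ ψ) * (gaussSum (χ^3) ψ * gaussSum (χ^3) ψ) := by
        rw [hI2a, hI2b]
  _ = (gaussSum χ ψ * gaussSum (χ^3) ψ) * (gaussSum χ ψ * gaussSum (χ^3) ψ) := by ring
  _ = ((-1 : K) ^ ((p - 1) / 4) * p) * ((-1 : K) ^ ((p - 1) / 4) * p) := by rw [hI1]
  _ = (((-1 : K) ^ ((p - 1) / 4)) ^ 2) * (p * p) := by ring
  _ = (p : K) * p := by rw [hE2, one_mul]

end Gauss

end DHL

namespace DHL

open Finset AddChar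

section CoreKey

variable {p : ℕ} [NeZero p] (hp : p.Prime) (hp4 : p % 4 = 1) (α : ZMod p)
  (hα : orderOf α = p - 1)
  {K : Type} [Field K] (ζ θ : K) (hζ : ζ ^ 2 = -1) (hθp : θ ^ p = 1) (hθ1 : θ ≠ 1)
  (hpK : (p : K) ≠ 0) (h2K : (2 : K) ≠ 0)

include hp hθ1 in
lemma psi_ne_one : (AddChar.zmodChar p hθp) ≠ 1 := by
  haveI : Fact (1 < p) := ⟨hp.one_lt⟩
  rw [AddChar.zmod_char_ne_one_iff, AddChar.zmodChar_apply, ZMod.val_one, pow_one]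
  exact hθ1

include hp hp4 hα hζ hθp hθ1 hpK h2K in
lemma core_key (s : ZMod p → ℤ) (hbin : ∀ i, s i = 0 ∨ s i = 1)
    (hs : ∀ x : ZMod p, s x = 1 ↔ ∃ k : ℕ, x = α ^ (4 * k) ∨ x = α ^ (1 + 4 * k))
    (hsum : (∑ i ∈ range p, (s (i : ZMod p) : K) * θ ^ i) = 0) :
    (((1 - (-1 : ℤ) ^ ((p - 1) / 4) * (p : ℤ)) ^ 2
      - (jacobiSum (chi0 hp hp4 α hα) (chi0 hp hp4 α hα)).im ^ 2 * (p : ℤ) : ℤ) : K) = 0 := by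
  haveI : Fact p.Prime := ⟨hp⟩
  set χ := chiK hp hp4 α hα ζ hζ with hχdef
  set ψ := AddChar.zmodChar p hθp with hψdef
  set J := jacobiSum (chi0 hp hp4 α hα) (chi0 hp hp4 α hα) with hJdef
  set E := (-1 : K) ^ ((p - 1) / 4) with hEdef
  -- Step A : sum over ZMod p
  have hsum2 : ∑ x : ZMod p, (s x : K) * θ ^ x.val = 0 := by
    rw [← hsum]
    apply Finset.sum_nbij' (fun x : ZMod p => x.val) (fun i : ℕ => (i : ZMod p))
    · intro a _
      exact Finset.mem_range.mpr (ZMod.val_lt a)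
    · intro b _
      exact Finset.mem_univ _
    · intro a _
      exact ZMod.natCast_zmod_val a
    · intro b hb
      exact ZMod.val_cast_of_lt (Finset.mem_range.mp hb)
    · intro a _
      rw [ZMod.natCast_zmod_val a]
  -- Step B : pointwise identity
  have halpha0 : α ≠ 0 := alpha_ne_zero hp hp4 α hα
  have hpt : ∀ x : ZMod p, (4 : K) * ((s x : K) * θ ^ x.val)
      = (2 * θ ^ x.val - 2 * (if x = 0 then θ ^ x.val else 0))
        + (1 - ζ) * (χ x * θ ^ x.val) + (1 + ζ) * ((χ ^ 3) x * θ ^ x.val) := by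
    intro x
    by_cases hx : x = 0
    · have hs0 : s x = 0 := by
        rcases hbin x with h | h
        · exact h
        · exfalso
          obtain ⟨k, hk | hk⟩ := (hs x).mp h
          · exact pow_ne_zero _ halpha0 (hx ▸ hk).symm
          · exact pow_ne_zero _ halpha0 (hx ▸ hk).symm
      have hχ0 : χ x = 0 := by rw [hx]; exact MulChar.map_zero χ
      have hχ30 : (χ ^ 3) x = 0 := by
        rw [MulChar.pow_apply' _ (by norm_num), hχ0]
        ring
      rw [hs0, hχ0, hχ30, if_pos hx]
      push_cast
      ring
    · obtain ⟨m, hm⟩ := exists_pow_eq hp hp4 α hα hx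
      have hχx : χ x = ζ ^ m := by
        rw [← hm]
        show glift ζ hζ (chi0 hp hp4 α hα (α ^ m)) = ζ ^ m
        rw [chi0_apply_pow, map_pow, glift_sqrtd]
      have hχ3x : (χ ^ 3) x = (ζ ^ m) ^ 3 := by
        rw [MulChar.pow_apply' _ (by norm_num), hχx]
      have hζ4 : ζ ^ 4 = 1 := by linear_combination (ζ ^ 2 - 1) * hζ
      have hζm : ζ ^ m = ζ ^ (m % 4) := by
        conv_lhs => rw [← Nat.div_add_mod m 4]
        rw [pow_add, pow_mul, hζ4, one_pow, one_mul]
      rw [if_neg hx, hχx, hχ3x, hζm]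
      have hd4 : (4 : ℕ) ∣ p - 1 := by have := p5 hp hp4; omega
      have hordα : orderOf α = p - 1 := hα
      have hαu : IsUnit α := isUnit_iff_ne_zero.mpr halpha0
      have hmod : ∀ k : ℕ, α ^ m = α ^ k → m % 4 = k % 4 := by
        intro k hk
        have hk' : hαu.unit ^ m = hαu.unit ^ k := by
          apply Units.ext
          rw [Units.val_pow_eq_pow_val, Units.val_pow_eq_pow_val, hαu.unit_spec]
          exact hk
        have hord : orderOf hαu.unit = p - 1 := by
          rw [← hα, ← orderOf_units, hαu.unit_spec]
        have h1 : m ≡ k [MOD p - 1] := by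
          rw [← hord]
          exact pow_eq_pow_iff_modEq.mp hk'
        have h2 : m ≡ k [MOD 4] := Nat.ModEq.of_dvd hd4 h1
        exact h2
      have hj4 : m % 4 < 4 := Nat.mod_lt _ (by norm_num)
      set j := m % 4 with hjdef
      interval_cases j
      · -- j = 0
        have hs1 : s x = 1 := (hs x).mpr ⟨m / 4, Or.inl (by rw [← hm]; congr 1; omega)⟩
        rw [hs1]
        push_cast
        ring
      · -- j = 1
        have hs1 : s x = 1 := (hs x).mpr ⟨m / 4, Or.inr (by rw [← hm]; congr 1; omega)⟩
        rw [hs1]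
        push_cast
        linear_combination ((2 - ζ - ζ ^ 2) * θ ^ x.val) * hζ
      · -- j = 2
        have hs0 : s x = 0 := by
          rcases hbin x with h | h
          · exact h
          · exfalso
            obtain ⟨k, hk | hk⟩ := (hs x).mp h
            · have := hmod (4 * k) (by rw [hm, hk])
              omega
            · have := hmod (1 + 4 * k) (by rw [hm, hk])
              omega
        rw [hs0]
        push_cast
        linear_combination ((-2 + ζ ^ 2 + ζ ^ 3 - ζ ^ 4 - ζ ^ 5) * θ ^ x.val) * hζ
      · -- j = 3
        have hs0 : s x = 0 := by
          rcases hbin x with h | h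
          · exact h
          · exfalso
            obtain ⟨k, hk | hk⟩ := (hs x).mp h
            · have := hmod (4 * k) (by rw [hm, hk])
              omega
            · have := hmod (1 + 4 * k) (by rw [hm, hk])
              omega
        rw [hs0]
        push_cast
        linear_combination ((-2 + 2 * ζ ^ 2 - ζ ^ 3 - ζ ^ 4 + ζ ^ 5 + ζ ^ 6 - ζ ^ 7 - ζ ^ 8)
          * θ ^ x.val) * hζ
  -- Step C : assemble into Gauss sums
  have hg1 : gaussSum χ ψ = ∑ x : ZMod p, χ x * θ ^ x.val := by
    apply Finset.sum_congr rfl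
    intro x _
    rw [hψdef, AddChar.zmodChar_apply]
  have hg3 : gaussSum (χ ^ 3) ψ = ∑ x : ZMod p, (χ ^ 3) x * θ ^ x.val := by
    apply Finset.sum_congr rfl
    intro x _
    rw [hψdef, AddChar.zmodChar_apply]
  have hsumtheta : ∑ x : ZMod p, θ ^ x.val = 0 := by
    have h := AddChar.sum_eq_zero_of_ne_one (psi_ne_one hp θ hθp hθ1)
    rw [← h]
    apply Finset.sum_congr rfl
    intro x _
    rw [AddChar.zmodChar_apply]
  have hsumite : ∑ x : ZMod p, (if x = 0 then θ ^ x.val else 0) = 1 := by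
    rw [Finset.sum_ite_eq' Finset.univ (0 : ZMod p) (fun x => θ ^ x.val)]
    simp [ZMod.val_zero]
  have hchain : (0 : K) = 2 * (0:K) - 2 * 1 + (1 - ζ) * gaussSum χ ψ
      + (1 + ζ) * gaussSum (χ ^ 3) ψ := by
    calc (0 : K) = 4 * ∑ x : ZMod p, (s x : K) * θ ^ x.val := by rw [hsum2, mul_zero]
    _ = ∑ x : ZMod p, (4 : K) * ((s x : K) * θ ^ x.val) := by rw [Finset.mul_sum]
    _ = ∑ x : ZMod p, ((2 * θ ^ x.val - 2 * (if x = 0 then θ ^ x.val else 0))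
        + (1 - ζ) * (χ x * θ ^ x.val) + (1 + ζ) * ((χ ^ 3) x * θ ^ x.val)) :=
        Finset.sum_congr rfl fun x _ => hpt x
    _ = (2 * (∑ x : ZMod p, θ ^ x.val)
          - 2 * (∑ x : ZMod p, (if x = 0 then θ ^ x.val else 0)))
        + (1 - ζ) * (∑ x : ZMod p, χ x * θ ^ x.val)
        + (1 + ζ) * (∑ x : ZMod p, (χ ^ 3) x * θ ^ x.val) := by
        rw [Finset.sum_add_distrib, Finset.sum_add_distrib, Finset.sum_sub_distrib,
          ← Finset.mul_sum, ← Finset.mul_sum, ← Finset.mul_sum, ← Finset.mul_sum]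
    _ = 2 * (0:K) - 2 * 1 + (1 - ζ) * gaussSum χ ψ + (1 + ζ) * gaussSum (χ ^ 3) ψ := by
        rw [hsumtheta, hsumite, hg1, hg3]
  have hkey : (1 - ζ) * gaussSum χ ψ + (1 + ζ) * gaussSum (χ ^ 3) ψ = 2 := by
    linear_combination -hchain
  -- Step D : squaring
  have hI1 := gauss_I1 hp hp4 α hα ζ θ hζ hθp hθ1 h2K
  have hI3 := gauss_I3 hp hp4 α hα ζ θ hζ hθp hθ1 h2K
  have hI2a := gauss_I2a hp hp4 α hα ζ θ hζ hθp hθ1 h2K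
  have hI2b := gauss_I2b hp hp4 α hα ζ θ hζ hθp hθ1 h2K
  set G1 := gaussSum χ ψ with hG1def
  set G2 := gaussSum (χ ^ 2) ψ with hG2def
  set G3 := gaussSum (χ ^ 3) ψ with hG3def
  set b : ℤ := J.im with hbdef
  have hstar : glift ζ hζ (star J) - glift ζ hζ J = -(2 * (b : K)) * ζ := by
    rw [hbdef]
    show (Zsqrtd.lift _) (star J) - (Zsqrtd.lift _) J = _
    rw [Zsqrtd.lift_apply_apply, Zsqrtd.lift_apply_apply, Zsqrtd.re_star, Zsqrtd.im_star]
    push_cast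
    ring
  have hsq : (4 : K) = 4 * ((b : K) * G2 + E * p) := by
    calc (4 : K) = ((1 - ζ) * G1 + (1 + ζ) * G3) ^ 2 := by rw [hkey]; norm_num
    _ = (-(2 * ζ)) * (G1 * G1) + (2 * ζ) * (G3 * G3) + 4 * (G1 * G3) := by
        linear_combination (G1 * G1 + G3 * G3 - 2 * (G1 * G3)) * hζ
    _ = (-(2 * ζ)) * (G2 * glift ζ hζ J) + (2 * ζ) * (G2 * glift ζ hζ (star J))
        + 4 * (E * p) := by rw [← hI2a, ← hI2b, hI1]
    _ = (2 * ζ) * G2 * (glift ζ hζ (star J) - glift ζ hζ J) + 4 * (E * p) := by ring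
    _ = (2 * ζ) * G2 * (-(2 * (b : K)) * ζ) + 4 * (E * p) := by rw [hstar]
    _ = 4 * ((b : K) * G2 + E * p) := by
        linear_combination (-(4 : K) * (b : K) * G2) * hζ
  have h4K : (4 : K) ≠ 0 := by
    have : (4 : K) = 2 * 2 := by norm_num
    rw [this]
    exact mul_ne_zero h2K h2K
  have hX : (b : K) * G2 + E * p = 1 := by
    apply mul_left_cancel₀ h4K
    rw [← hsq]
    norm_num
  have hbG2 : (b : K) * G2 = 1 - E * p := by linear_combination hX
  have hfinal : ((b : K)) ^ 2 * (p : K) = (1 - E * p) ^ 2 := by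
    calc ((b : K)) ^ 2 * (p : K) = ((b : K)) ^ 2 * (G2 * G2) := by rw [hI3]
    _ = ((b : K) * G2) ^ 2 := by ring
    _ = (1 - E * p) ^ 2 := by rw [hbG2]
  push_cast
  rw [hEdef] at hfinal
  linear_combination -hfinal

end CoreKey

end DHL

namespace DHL

open Finset

section NormEval

variable {p : ℕ} [NeZero p] (hp : p.Prime) (hp4 : p % 4 = 1) (α : ZMod p)
  (hα : orderOf α = p - 1)

include hp hp4 hα in
lemma jacobi_norm : Zsqrtd.norm (jacobiSum (chi0 hp hp4 α hα) (chi0 hp hp4 α hα)) = p := by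
  have hp0 : p ≠ 0 := NeZero.ne p
  have hprim : IsPrimitiveRoot (Complex.exp (2 * Real.pi * Complex.I / p)) p :=
    Complex.isPrimitiveRoot_exp p hp0
  have hθp : (Complex.exp (2 * Real.pi * Complex.I / p)) ^ p = 1 := hprim.pow_eq_one
  have hθ1 : Complex.exp (2 * Real.pi * Complex.I / p) ≠ 1 := hprim.ne_one hp.one_lt
  have hζ : (Complex.I : ℂ) ^ 2 = -1 := Complex.I_sq
  have hpK : ((p : ℂ)) ≠ 0 := Nat.cast_ne_zero.mpr hp0
  have h2K : ((2 : ℂ)) ≠ 0 := two_ne_zero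
  have h := core_norm hp hp4 α hα Complex.I _ hζ hθp hθ1 hpK h2K
  exact_mod_cast h

include hp hp4 hα in
lemma jacobi_im_sq_le :
    (jacobiSum (chi0 hp hp4 α hα) (chi0 hp hp4 α hα)).im ^ 2 ≤ (p : ℤ) := by
  have h := jacobi_norm hp hp4 α hα
  rw [Zsqrtd.norm_def] at h
  set J := jacobiSum (chi0 hp hp4 α hα) (chi0 hp hp4 α hα)
  nlinarith [sq_nonneg J.re, sq_nonneg J.im]

end NormEval

lemma arith_contra (p q : ℕ) (hp5 : 5 ≤ p) (hpodd : p % 2 = 1) (hq1 : 2 ≤ q)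
    (hqodd : q % 2 = 1) (hqp : q % p = 1) (E b : ℤ) (hE : E = 1 ∨ E = -1)
    (hb2 : b ^ 2 ≤ (p : ℤ)) (hbe : 2 ∣ b)
    (hdvd : (q : ℤ) ∣ (1 - E * (p : ℤ)) ^ 2 - b ^ 2 * (p : ℤ)) : False := by
  obtain ⟨c, hc⟩ := hdvd
  set M : ℤ := (1 - E * (p : ℤ)) ^ 2 - b ^ 2 * (p : ℤ) with hM
  have hE2 : E ^ 2 = 1 := by rcases hE with h | h <;> rw [h] <;> norm_num
  have hb0 : (0 : ℤ) ≤ b ^ 2 := sq_nonneg b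
  have ht : M = 1 + (p : ℤ) * ((p : ℤ) - 2 * E - b ^ 2) := by
    rw [hM]
    linear_combination ((p : ℤ) ^ 2) * hE2
  -- q ≥ 2p + 1
  have hd := Nat.div_add_mod q p
  set d := q / p with hdd
  rw [hqp] at hd
  have hq2p : 2 * p + 1 ≤ q := by
    rcases Nat.lt_or_ge d 2 with h | h
    · interval_cases d
      · omega
      · omega
    · have h2 : p * 2 ≤ p * d := Nat.mul_le_mul_left p h
      omega
  -- M even
  have hpz : ((p : ℤ)) % 2 = 1 := by omega
  have hMeven : 2 ∣ M := by
    obtain ⟨b', rfl⟩ := hbe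
    have hu : 2 ∣ (1 - E * (p : ℤ)) := by
      rcases hE with h | h <;> rw [h] <;> omega
    obtain ⟨u', hu'⟩ := hu
    refine ⟨2 * u' ^ 2 - 2 * b' ^ 2 * (p : ℤ), ?_⟩
    rw [hM]
    linear_combination (1 - E * (p:ℤ) + 2*u') * hu'
  -- p ∣ c - 1
  have hpM1 : (p : ℤ) ∣ M - 1 := ⟨(p : ℤ) - 2 * E - b ^ 2, by linear_combination ht⟩
  have hdz : (p : ℤ) * (d : ℤ) + 1 = (q : ℤ) := by exact_mod_cast hd
  have hpq1 : (p : ℤ) ∣ (q : ℤ) - 1 := ⟨d, by linear_combination -hdz⟩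
  have hpc1 : (p : ℤ) ∣ c - 1 := by
    have heq : c - 1 = -c * ((q : ℤ) - 1) + (M - 1) := by linear_combination -hc
    rw [heq]
    exact dvd_add (Dvd.dvd.mul_left hpq1 (-c)) hpM1
  -- bounds
  have hqz : (2 * (p : ℤ) + 1) ≤ (q : ℤ) := by exact_mod_cast hq2p
  have hpz5 : (5 : ℤ) ≤ (p : ℤ) := by exact_mod_cast hp5
  have htlow : (-2 : ℤ) ≤ (p : ℤ) - 2 * E - b ^ 2 := by
    rcases hE with h | h <;> rw [h] <;> linarith
  have hthigh : (p : ℤ) - 2 * E - b ^ 2 ≤ (p : ℤ) + 2 := by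
    rcases hE with h | h <;> rw [h] <;> linarith
  have hMlow : 1 - 2 * (p : ℤ) ≤ M := by
    rw [ht]
    nlinarith
  have hMhigh : M ≤ 1 + (p : ℤ) * ((p : ℤ) + 2) := by
    rw [ht]
    nlinarith
  have hc1 : c = 1 := by
    rcases lt_trichotomy c 1 with h | h | h
    · rcases lt_trichotomy c 0 with h0 | h0 | h0
      · -- c ≤ -1
        have : M ≤ -(q : ℤ) := by
          rw [hc]
          nlinarith
        linarith
      · -- c = 0
        rw [h0, mul_zero] at hc
        rw [hc] at hpM1
        have : (p : ℤ) ∣ 1 := by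
          have := hpM1
          simpa using (dvd_neg.mpr this)
        have := Int.le_of_dvd one_pos this
        linarith
      · omega
    · exact h
    · -- c ≥ 2
      have hcp : (p : ℤ) ≤ c - 1 := Int.le_of_dvd (by omega) hpc1
      have : ((2 * (p:ℤ) + 1)) * ((p:ℤ) + 1) ≤ (q : ℤ) * c := by
        apply mul_le_mul hqz (by linarith) (by linarith) (by linarith)
      rw [← hc] at this
      nlinarith
  rw [hc1, mul_one] at hc
  obtain ⟨m2, hm2⟩ := hMeven
  have : (q : ℤ) = 2 * m2 := by rw [← hc, hm2]
  omega

end DHL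

open DHL Finset

theorem stmt15 (p : ℕ) (hp : p.Prime) (hp4 : p % 4 = 1) [NeZero p]
    (α : ZMod p) (hα : orderOf α = p - 1)
    (s : ZMod p → ℤ) (hbin : ∀ i, s i = 0 ∨ s i = 1)
    (hs : ∀ x : ZMod p, s x = 1 ↔ ∃ k : ℕ, x = α ^ (4 * k) ∨ x = α ^ (1 + 4 * k)) :
    Int.gcd (∑ i ∈ Finset.range p, s (i : ZMod p) * 2 ^ i) (2 ^ p - 1) = 1 := by
  haveI : Fact p.Prime := ⟨hp⟩
  set S : ℤ := ∑ i ∈ Finset.range p, s (i : ZMod p) * 2 ^ i with hS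
  by_contra hne
  obtain ⟨q, hq, hqdvd⟩ := Nat.exists_prime_and_dvd hne
  haveI : Fact q.Prime := ⟨hq⟩
  have hqS : (q : ℤ) ∣ S :=
    dvd_trans (Int.natCast_dvd_natCast.mpr hqdvd) (Int.gcd_dvd_left _ _)
  have hqM : (q : ℤ) ∣ 2 ^ p - 1 :=
    dvd_trans (Int.natCast_dvd_natCast.mpr hqdvd) (Int.gcd_dvd_right _ _)
  have hp0 : p ≠ 0 := NeZero.ne p
  have hq2 : q ≠ 2 := by
    intro h
    rw [h] at hqM
    have h2 : (2 : ℤ) ∣ 2 ^ p := dvd_pow_self 2 hp0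
    have := dvd_sub h2 hqM
    norm_num at this
  have hqodd : q % 2 = 1 := by
    rcases hq.eq_two_or_odd with h | h
    · exact absurd h hq2
    · exact h
  have hqp_ne : q ≠ p := by
    intro h
    subst h
    have h0 : ((2 ^ q - 1 : ℤ) : ZMod q) = 0 := by
      rw [ZMod.intCast_zmod_eq_zero_iff_dvd]
      exact hqM
    push_cast at h0
    rw [ZMod.pow_card] at h0
    norm_num at h0
  set K := AlgebraicClosure (ZMod q) with hK
  have hKM : ((2 ^ p - 1 : ℤ) : K) = 0 := (CharP.intCast_eq_zero_iff K q _).mpr hqM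
  have hθp : (2 : K) ^ p = 1 := by
    push_cast at hKM
    linear_combination hKM
  have hθ1 : (2 : K) ≠ 1 := by
    intro h
    have : (1 : K) = 0 := by linear_combination h
    exact one_ne_zero this
  have h2K : (2 : K) ≠ 0 := by
    intro h
    have h2 : ((2 : ℕ) : K) = 0 := by exact_mod_cast h
    have := (CharP.cast_eq_zero_iff K q 2).mp h2
    have := Nat.le_of_dvd (by norm_num) this
    have := hq.two_le
    exact hq2 (by omega)
  have hpK : (p : K) ≠ 0 := by
    intro h
    have h2 : ((p : ℕ) : K) = 0 := h
    have hdq := (CharP.cast_eq_zero_iff K q p).mp h2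
    exact hqp_ne ((Nat.prime_dvd_prime_iff_eq hq hp).mp hdq)
  obtain ⟨ζ, hζ'⟩ := IsAlgClosed.exists_pow_nat_eq (-1 : K) (n := 2) (by norm_num)
  have hsum : (∑ i ∈ range p, ((s (i : ZMod p)) : K) * (2 : K) ^ i) = 0 := by
    have h0 : ((S : ℤ) : K) = 0 := (CharP.intCast_eq_zero_iff K q S).mpr hqS
    rw [hS] at h0
    push_cast at h0
    rw [@Int.cast_sum (AlgebraicClosure (ZMod q))] at h0
    simpa using h0
  have hkey := core_key hp hp4 α hα ζ (2 : K) hζ' hθp hθ1 hpK h2K s hbin hs hsum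
  have hdvd : (q : ℤ) ∣ ((1 - (-1 : ℤ) ^ ((p - 1) / 4) * (p : ℤ)) ^ 2
      - (jacobiSum (chi0 hp hp4 α hα) (chi0 hp hp4 α hα)).im ^ 2 * (p : ℤ)) :=
    (CharP.intCast_eq_zero_iff K q _).mp hkey
  have hop : orderOf (2 : ZMod q) = p := by
    have h0 : ((2 ^ p - 1 : ℤ) : ZMod q) = 0 := by
      rw [ZMod.intCast_zmod_eq_zero_iff_dvd]
      exact hqM
    push_cast at h0
    have h2q1 : (2 : ZMod q) ^ p = 1 := by linear_combination h0
    have hdvd' := orderOf_dvd_of_pow_eq_one h2q1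
    rcases (Nat.Prime.eq_one_or_self_of_dvd hp _ hdvd') with h | h
    · exfalso
      have h1 : (2 : ZMod q) = 1 := orderOf_eq_one_iff.mp h
      have : (1 : ZMod q) = 0 := by linear_combination h1
      exact one_ne_zero this
    · exact h
  have hqmodp : q % p = 1 := by
    have h2z : (2 : ZMod q) ≠ 0 := by
      intro h
      have h2 : ((2 : ℕ) : ZMod q) = 0 := by exact_mod_cast h
      have := (ZMod.natCast_eq_zero_iff 2 q).mp h2
      have := Nat.le_of_dvd (by norm_num) this
      have := hq.two_le
      exact hq2 (by omega)
    have hfl : (2 : ZMod q) ^ (q - 1) = 1 := ZMod.pow_card_sub_one_eq_one h2z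
    have hdv := orderOf_dvd_of_pow_eq_one hfl
    rw [hop] at hdv
    have hmq : 1 ≡ q [MOD p] := (Nat.modEq_iff_dvd' (by have := hq.two_le; omega)).mpr hdv
    have h5 := p5 hp hp4
    have : q % p = 1 % p := hmq.symm
    rwa [Nat.mod_eq_of_lt (show 1 < p by omega)] at this
  have hE : (-1 : ℤ) ^ ((p - 1) / 4) = 1 ∨ (-1 : ℤ) ^ ((p - 1) / 4) = -1 := by
    rcases Nat.even_or_odd ((p - 1) / 4) with h | h
    · exact Or.inl (Even.neg_one_pow h)
    · exact Or.inr (Odd.neg_one_pow h)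
  exact arith_contra p q (p5 hp hp4) (by omega) hq.two_le hqodd hqmodp
    ((-1 : ℤ) ^ ((p - 1) / 4)) ((jacobiSum (chi0 hp hp4 α hα) (chi0 hp hp4 α hα)).im)
    hE (jacobi_im_sq_le hp hp4 α hα) (jacobiSum_chi0_im_even hp hp4 α hα) hdvd
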